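/- arXiv:1311.4357 — 3 statements merged into one kernel-verified Lean document; each statement's English description precedes it below -/
import Mathlib

section
/- Let I be a closed arc in the unit circle ∂𝔻 with an open neighborhood U ⊂ ℂ, and let χ : U ∩ cl(𝔻) → ℂ be a continuous function satisfying δ < |χ(z)| < 1 − δ for some 0 < δ < 1. Then there exists N ∈ ℕ such that for every k ≥ N the equation z^k = χ(z) has at least k·|I| solutions in U ∩ cl(𝔻), where |I| denotes the normalized arc length of I. -/
open Complex Metric

local notation "π" => Real.pi

lemma exp_telescope (P : ℕ → ℂ) (n : ℕ) (hP : ∀ j, j ≤ n → P j ≠ 0) :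
    Complex.exp (∑ j ∈ Finset.range n, Complex.log (P (j+1) / P j)) = P n / P 0 := by
  induction n with
  | zero => simpa using (div_self (hP 0 le_rfl)).symm
  | succ n ih =>
    rw [Finset.sum_range_succ, Complex.exp_add, ih (fun j hj => hP j (hj.trans n.le_succ)),
      Complex.exp_log (div_ne_zero (hP (n+1) le_rfl) (hP n n.le_succ))]
    rw [div_mul_div_comm]
    rw [mul_comm (P 0) (P n)] at *
    exact mul_div_mul_left _ _ (hP n n.le_succ)

lemma exists_branch {t0 t1 r0 r1 : ℝ} (ht : t0 ≤ t1) (hr : r0 ≤ r1)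
    (g : ℝ × ℝ → ℂ) (hg : ContinuousOn g (Set.Icc t0 t1 ×ˢ Set.Icc r0 r1))
    (hg0 : ∀ p ∈ Set.Icc t0 t1 ×ˢ Set.Icc r0 r1, g p ≠ 0) :
    ∃ F : ℝ × ℝ → ℂ, Continuous F ∧
      ∀ p ∈ Set.Icc t0 t1 ×ˢ Set.Icc r0 r1, Complex.exp (F p) = g p := by
  set R : Set (ℝ × ℝ) := Set.Icc t0 t1 ×ˢ Set.Icc r0 r1 with hR
  have hRc : IsCompact R := (isCompact_Icc).prod isCompact_Icc
  have hRne : R.Nonempty := ⟨(t0, r0), by simp [hR, ht, hr]⟩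
  -- clamping
  set c : ℝ → ℝ := fun x => max t0 (min x t1) with hc
  set d : ℝ → ℝ := fun y => max r0 (min y r1) with hd
  have hcmem : ∀ x, c x ∈ Set.Icc t0 t1 := fun x =>
    ⟨le_max_left _ _, max_le ht (min_le_right _ _)⟩
  have hdmem : ∀ y, d y ∈ Set.Icc r0 r1 := fun y =>
    ⟨le_max_left _ _, max_le hr (min_le_right _ _)⟩
  have hcid : ∀ x ∈ Set.Icc t0 t1, c x = x := by
    intro x hx
    simp only [hc]
    rw [min_eq_left hx.2, max_eq_right hx.1]
  have hdid : ∀ y ∈ Set.Icc r0 r1, d y = y := by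
    intro y hy
    simp only [hd]
    rw [min_eq_left hy.2, max_eq_right hy.1]
  have hclip : ∀ x x' : ℝ, |c x - c x'| ≤ |x - x'| := by
    intro x x'
    calc |c x - c x'| ≤ max |t0 - t0| |min x t1 - min x' t1| := abs_max_sub_max_le_max _ _ _ _
    _ ≤ |x - x'| := by
        simp only [sub_self, abs_zero]
        refine max_le (abs_nonneg _) ?_
        calc |min x t1 - min x' t1| ≤ max |x - x'| |t1 - t1| := abs_min_sub_min_le_max _ _ _ _
        _ = |x - x'| := by simp
  have hdlip : ∀ y y' : ℝ, |d y - d y'| ≤ |y - y'| := by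
    intro y y'
    calc |d y - d y'| ≤ max |r0 - r0| |min y r1 - min y' r1| := abs_max_sub_max_le_max _ _ _ _
    _ ≤ |y - y'| := by
        simp only [sub_self, abs_zero]
        refine max_le (abs_nonneg _) ?_
        calc |min y r1 - min y' r1| ≤ max |y - y'| |r1 - r1| := abs_min_sub_min_le_max _ _ _ _
        _ = |y - y'| := by simp
  have hccont : Continuous c := continuous_const.max (continuous_id.min continuous_const)
  have hdcont : Continuous d := continuous_const.max (continuous_id.min continuous_const)
  -- clamped function
  set G : ℝ × ℝ → ℂ := fun p => g (c p.1, d p.2) with hG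
  have hclampmem : ∀ p : ℝ × ℝ, (c p.1, d p.2) ∈ R := fun p => by
    simp only [hR, Set.mem_prod]; exact ⟨hcmem _, hdmem _⟩
  have hGcont : Continuous G :=
    hg.comp_continuous ((hccont.comp continuous_fst).prodMk (hdcont.comp continuous_snd))
      hclampmem
  have hGg : ∀ p ∈ R, G p = g p := by
    intro p hp
    exact congrArg g (Prod.ext (hcid _ hp.1) (hdid _ hp.2))
  have hG0 : ∀ p : ℝ × ℝ, G p ≠ 0 := fun p => hg0 _ (hclampmem p)
  have hGclamp : ∀ p : ℝ × ℝ, G (c p.1, d p.2) = G p := by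
    intro p
    exact congrArg g (Prod.ext (hcid _ (hcmem _)) (hdid _ (hdmem _)))
  -- minimum of |G|
  obtain ⟨pm, hpmR, hpm⟩ := hRc.exists_isMinOn hRne (continuous_norm.comp hGcont).continuousOn
  set m : ℝ := ‖G pm‖ with hm
  have hm0 : 0 < m := by
    rw [hm]
    exact norm_pos_iff.mpr (hG0 pm)
  have hmle : ∀ p : ℝ × ℝ, m ≤ ‖G p‖ := by
    intro p
    have h2 := isMinOn_iff.mp hpm _ (hclampmem p)
    simp only [Function.comp_apply] at h2
    rw [hGclamp p] at h2
    exact h2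
  -- uniform continuity
  have huc := hRc.uniformContinuousOn_of_continuous hGcont.continuousOn
  rw [Metric.uniformContinuousOn_iff] at huc
  obtain ⟨ρ, hρ0, hρ⟩ := huc m hm0
  have hglob : ∀ p q : ℝ × ℝ, dist p q < ρ → ‖G p - G q‖ < m := by
    intro p q hpq
    have hd' : dist ((c p.1, d p.2) : ℝ × ℝ) (c q.1, d q.2) < ρ := by
      rw [Prod.dist_eq] at hpq ⊢
      simp only [Real.dist_eq] at hpq ⊢
      exact lt_of_le_of_lt (max_le_max (hclip _ _) (hdlip _ _)) hpq
    have := hρ _ (hclampmem p) _ (hclampmem q) hd'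
    rw [hGclamp, hGclamp] at this
    rwa [Complex.dist_eq] at this
  -- ratios are in the slit plane
  have hslit : ∀ p q : ℝ × ℝ, dist p q < ρ → G p / G q ∈ Complex.slitPlane := by
    intro p q hpq
    have h1 : ‖G p / G q - 1‖ < 1 := by
      rw [show G p / G q - 1 = (G p - G q) / G q by rw [sub_div, div_self (hG0 q)]]
      rw [norm_div]
      rw [div_lt_one (by exact hm0.trans_le (hmle q))]
      calc ‖G p - G q‖ < m := hglob p q hpq
      _ ≤ ‖G q‖ := hmle q
    have : G p / G q = 1 + (G p / G q - 1) := by ring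
    rw [this]
    exact Complex.mem_slitPlane_of_norm_lt_one h1
  -- the grid
  obtain ⟨N, hN⟩ := exists_nat_gt (max ((t1 - t0) / ρ) ((r1 - r0) / ρ))
  have hN0 : 0 < (N : ℝ) := lt_of_le_of_lt (le_max_of_le_left (div_nonneg (by linarith) hρ0.le)) hN
  set st : ℝ := (t1 - t0) / N with hst
  set sr : ℝ := (r1 - r0) / N with hsr
  have hstρ : st < ρ := by
    rw [hst, div_lt_iff₀ hN0]
    have := (div_lt_iff₀ hρ0).mp (lt_of_le_of_lt (le_max_left _ _) hN)
    linarith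
  have hsrρ : sr < ρ := by
    rw [hsr, div_lt_iff₀ hN0]
    have := (div_lt_iff₀ hρ0).mp (lt_of_le_of_lt (le_max_right _ _) hN)
    linarith
  have hst0 : 0 ≤ st := div_nonneg (by linarith) hN0.le
  have hsr0 : 0 ≤ sr := div_nonneg (by linarith) hN0.le
  set T : ℕ → ℝ := fun j => t0 + j * st with hT
  set Rr : ℕ → ℝ := fun j => r0 + j * sr with hRr
  have hT0 : T 0 = t0 := by simp [hT]
  have hTN : T N = t1 := by
    simp only [hT, hst]
    field_simp
    ring
  have hR0 : Rr 0 = r0 := by simp [hRr]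
  have hRN : Rr N = r1 := by
    simp only [hRr, hsr]
    field_simp
    ring
  have hTstep : ∀ j : ℕ, T (j+1) - T j = st := by
    intro j
    simp only [hT]
    push_cast
    ring
  have hRstep : ∀ j : ℕ, Rr (j+1) - Rr j = sr := by
    intro j
    simp only [hRr]
    push_cast
    ring
  -- distance bounds for the grid ratios
  have hdist1 : ∀ (x : ℝ) (j : ℕ),
      dist ((min x (T (j+1)), r0) : ℝ × ℝ) (min x (T j), r0) < ρ := by
    intro x j
    rw [Prod.dist_eq]
    simp only [dist_self, Real.dist_eq]
    refine max_lt ?_ hρ0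
    calc |min x (T (j+1)) - min x (T j)| ≤ max |x - x| |T (j+1) - T j| :=
          abs_min_sub_min_le_max _ _ _ _
    _ = |st| := by simp [hTstep j]
    _ < ρ := by rwa [_root_.abs_of_nonneg hst0]
  have hdist2 : ∀ (x y : ℝ) (j : ℕ),
      dist ((x, min y (Rr (j+1))) : ℝ × ℝ) (x, min y (Rr j)) < ρ := by
    intro x y j
    rw [Prod.dist_eq]
    simp only [dist_self, Real.dist_eq]
    refine max_lt hρ0 ?_
    calc |min y (Rr (j+1)) - min y (Rr j)| ≤ max |y - y| |Rr (j+1) - Rr j| :=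
          abs_min_sub_min_le_max _ _ _ _
    _ = |sr| := by simp [hRstep j]
    _ < ρ := by rwa [_root_.abs_of_nonneg hsr0]
  -- the branch
  refine ⟨fun p => Complex.log (G (t0, r0))
      + ∑ j ∈ Finset.range N, Complex.log (G (min p.1 (T (j+1)), r0) / G (min p.1 (T j), r0))
      + ∑ j ∈ Finset.range N, Complex.log (G (p.1, min p.2 (Rr (j+1))) / G (p.1, min p.2 (Rr j))),
      ?_, ?_⟩
  · refine (continuous_const.add (continuous_finset_sum _ fun j _ => ?_)).add
      (continuous_finset_sum _ fun j _ => ?_)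
    · refine Continuous.clog ?_ ?_
      · exact ((hGcont.comp ((continuous_fst.min continuous_const).prodMk
          continuous_const)).div (hGcont.comp ((continuous_fst.min
          continuous_const).prodMk continuous_const)) (fun p => hG0 _))
      · intro p
        exact hslit _ _ (hdist1 p.1 j)
    · refine Continuous.clog ?_ ?_
      · exact ((hGcont.comp (continuous_fst.prodMk
          (continuous_snd.min continuous_const))).div (hGcont.comp (continuous_fst.prodMk
          (continuous_snd.min continuous_const))) (fun p => hG0 _))
      · intro p
        exact hslit _ _ (hdist2 p.1 p.2 j)
  · rintro ⟨x, y⟩ hp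
    have hx : x ∈ Set.Icc t0 t1 := hp.1
    have hy : y ∈ Set.Icc r0 r1 := hp.2
    rw [Complex.exp_add, Complex.exp_add]
    rw [Complex.exp_log (hG0 _)]
    rw [exp_telescope (fun j => G (min x (T j), r0)) N (fun j _ => hG0 _)]
    rw [exp_telescope (fun j => G (x, min y (Rr j))) N (fun j _ => hG0 _)]
    have e1 : min x (T N) = x := by rw [hTN]; exact min_eq_left hx.2
    have e2 : min x (T 0) = t0 := by rw [hT0]; exact min_eq_right hx.1
    have e3 : min y (Rr N) = y := by rw [hRN]; exact min_eq_left hy.2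
    have e4 : min y (Rr 0) = r0 := by rw [hR0]; exact min_eq_right hy.1
    rw [e1, e2, e3, e4]
    rw [← hGg (x, y) hp]
    field_simp
    exact mul_div_cancel_left₀ _ (mul_ne_zero (hG0 _) (hG0 _))

lemma confine {h : ℝ → ℝ} {u v c d w : ℝ} (hc : ContinuousOn h (Set.Icc u v))
    (hw : w ∈ Set.Icc u v) (hne : ∀ s ∈ Set.Icc u v, h s ≠ c ∧ h s ≠ d)
    (h0 : h w ∈ Set.Ioo c d) : ∀ s ∈ Set.Icc u v, h s ∈ Set.Ioo c d := by
  intro s hs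
  have hsub : Set.uIcc w s ⊆ Set.Icc u v := Set.uIcc_subset_Icc hw hs
  have hiv := intermediate_value_uIcc (hc.mono hsub)
  rcases lt_trichotomy (h s) c with h1 | h1 | h1
  · exfalso
    have : c ∈ Set.uIcc (h w) (h s) := by
      rw [Set.mem_uIcc]; right; exact ⟨h1.le, h0.1.le⟩
    obtain ⟨x, hx, hx'⟩ := hiv this
    exact (hne x (hsub hx)).1 hx'
  · exact absurd h1 (hne s hs).1
  · rcases lt_trichotomy (h s) d with h2 | h2 | h2
    · exact ⟨h1, h2⟩
    · exact absurd h2 (hne s hs).2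
    · exfalso
      have : d ∈ Set.uIcc (h w) (h s) := by
        rw [Set.mem_uIcc]; left; exact ⟨h0.2.le, h2.le⟩
      obtain ⟨x, hx, hx'⟩ := hiv this
      exact (hne x (hsub hx)).2 hx'

lemma miranda {t0 t1 r0 r1 : ℝ} (ht : t0 ≤ t1) (hr : r0 ≤ r1)
    (f : ℝ × ℝ → ℂ) (hf : ContinuousOn f (Set.Icc t0 t1 ×ˢ Set.Icc r0 r1))
    (hleft : ∀ r ∈ Set.Icc r0 r1, (f (t0, r)).re < 0)
    (hright : ∀ r ∈ Set.Icc r0 r1, 0 < (f (t1, r)).re)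
    (hbot : ∀ t ∈ Set.Icc t0 t1, (f (t, r0)).im < 0)
    (htop : ∀ t ∈ Set.Icc t0 t1, 0 < (f (t, r1)).im) :
    ∃ p ∈ Set.Icc t0 t1 ×ˢ Set.Icc r0 r1, f p = 0 := by
  by_contra hcon
  push_neg at hcon
  set R : Set (ℝ × ℝ) := Set.Icc t0 t1 ×ˢ Set.Icc r0 r1 with hRdef
  obtain ⟨F, hFc, hFe⟩ := exists_branch ht hr f hf hcon
  have hπ : 0 < π := Real.pi_pos
  set n : ℤ := ⌊(F (t0, r0)).im / (2 * π)⌋ with hn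
  obtain ⟨ψ, hψdef⟩ : ∃ ψ : ℝ × ℝ → ℝ, ψ = fun p => (F p).im - (n : ℝ) * (2 * π) := ⟨_, rfl⟩
  have hψc : Continuous ψ := by
    rw [hψdef]
    exact (Complex.continuous_im.comp hFc).sub continuous_const
  have hmem : ∀ t ∈ Set.Icc t0 t1, ∀ r ∈ Set.Icc r0 r1, ((t, r) : ℝ × ℝ) ∈ R := by
    intro t htm r hrm
    exact Set.mem_prod.mpr ⟨htm, hrm⟩
  -- sign transfer
  have hcos : ∀ p : ℝ × ℝ, Real.cos (ψ p) = Real.cos ((F p).im) := by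
    intro p
    rw [hψdef]
    exact Real.cos_sub_int_mul_two_pi _ n
  have hsin : ∀ p : ℝ × ℝ, Real.sin (ψ p) = Real.sin ((F p).im) := by
    intro p
    rw [hψdef]
    exact Real.sin_sub_int_mul_two_pi _ n
  have hre : ∀ p ∈ R, (f p).re = Real.exp ((F p).re) * Real.cos (ψ p) := by
    intro p hp
    rw [← hFe p hp] at *
    rw [Complex.exp_re, hcos]
  have him : ∀ p ∈ R, (f p).im = Real.exp ((F p).re) * Real.sin (ψ p) := by
    intro p hp
    rw [← hFe p hp] at *
    rw [Complex.exp_im, hsin]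
  have hcosneg : ∀ r ∈ Set.Icc r0 r1, Real.cos (ψ (t0, r)) < 0 := by
    intro r hrm
    have h1 := hleft r hrm
    rw [hre _ (hmem t0 ⟨le_refl _, ht⟩ r hrm)] at h1
    nlinarith [Real.exp_pos ((F (t0, r)).re)]
  have hcospos : ∀ r ∈ Set.Icc r0 r1, 0 < Real.cos (ψ (t1, r)) := by
    intro r hrm
    have h1 := hright r hrm
    rw [hre _ (hmem t1 ⟨ht, le_refl _⟩ r hrm)] at h1
    nlinarith [Real.exp_pos ((F (t1, r)).re)]
  have hsinneg : ∀ t ∈ Set.Icc t0 t1, Real.sin (ψ (t, r0)) < 0 := by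
    intro t htm
    have h1 := hbot t htm
    rw [him _ (hmem t htm r0 ⟨le_refl _, hr⟩)] at h1
    nlinarith [Real.exp_pos ((F (t, r0)).re)]
  have hsinpos : ∀ t ∈ Set.Icc t0 t1, 0 < Real.sin (ψ (t, r1)) := by
    intro t htm
    have h1 := htop t htm
    rw [him _ (hmem t htm r1 ⟨hr, le_refl _⟩)] at h1
    nlinarith [Real.exp_pos ((F (t, r1)).re)]
  -- trig zeros
  have hc32 : Real.cos (3 * π / 2) = 0 := by
    rw [show (3 * π / 2 : ℝ) = π / 2 + π by ring, Real.cos_add_pi, Real.cos_pi_div_two, neg_zero]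
  have hc52 : Real.cos (5 * π / 2) = 0 := by
    rw [show (5 * π / 2 : ℝ) = π / 2 + 2 * π by ring, Real.cos_add_two_pi, Real.cos_pi_div_two]
  have hc72 : Real.cos (7 * π / 2) = 0 := by
    rw [show (7 * π / 2 : ℝ) = 3 * π / 2 + 2 * π by ring, Real.cos_add_two_pi, hc32]
  have hs3 : Real.sin (3 * π) = 0 := by
    rw [show (3 * π : ℝ) = π + 2 * π by ring, Real.sin_add_two_pi, Real.sin_pi]
  -- base point normalization
  have h00mem : ((t0, r0) : ℝ × ℝ) ∈ R := hmem t0 ⟨le_refl _, ht⟩ r0 ⟨le_refl _, hr⟩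
  have hψ00lo : 0 ≤ ψ (t0, r0) := by
    have := Int.floor_le ((F (t0, r0)).im / (2 * π))
    rw [← hn] at this
    rw [hψdef]
    simp only
    rw [sub_nonneg]
    calc (n : ℝ) * (2 * π) ≤ ((F (t0, r0)).im / (2 * π)) * (2 * π) := by
          apply mul_le_mul_of_nonneg_right this (by positivity)
    _ = (F (t0, r0)).im := by field_simp
  have hψ00hi : ψ (t0, r0) < 2 * π := by
    have := Int.lt_floor_add_one ((F (t0, r0)).im / (2 * π))
    rw [← hn] at this
    rw [hψdef]
    simp only
    rw [sub_lt_iff_lt_add]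
    calc (F (t0, r0)).im = ((F (t0, r0)).im / (2 * π)) * (2 * π) := by field_simp
    _ < ((n : ℝ) + 1) * (2 * π) := by
          apply mul_lt_mul_of_pos_right this (by positivity)
    _ = 2 * π + n * (2 * π) := by ring
  have h00 : ψ (t0, r0) ∈ Set.Ioo π (3 * π / 2) := by
    constructor
    · by_contra hle
      push_neg at hle
      have := Real.sin_nonneg_of_nonneg_of_le_pi hψ00lo hle
      have := hsinneg t0 ⟨le_refl _, ht⟩
      linarith
    · by_contra hle
      push_neg at hle
      have h1 : ψ (t0, r0) - 2 * π ∈ Set.Icc (-(π/2)) (π/2) := by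
        constructor <;> [linarith; linarith]
      have h2 := Real.cos_nonneg_of_mem_Icc h1
      rw [Real.cos_sub_two_pi] at h2
      have := hcosneg r0 ⟨le_refl _, hr⟩
      linarith
  -- bottom edge
  have hbot' := confine (h := fun s => ψ (s, r0)) (u := t0) (v := t1) (c := π) (d := 2 * π)
    (w := t0)
    (by exact (hψc.comp (continuous_id.prodMk continuous_const)).continuousOn)
    ⟨le_refl _, ht⟩
    (fun s hs => ⟨fun h => by
        have := hsinneg s hs; rw [show ψ (s, r0) = π from h, Real.sin_pi] at this; linarith,
      fun h => by
        have := hsinneg s hs; rw [show ψ (s, r0) = 2*π from h, Real.sin_two_pi] at this; linarith⟩)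
    ⟨h00.1, by have := h00.2; linarith⟩
  have h10 : ψ (t1, r0) ∈ Set.Ioo (3 * π / 2) (2 * π) := by
    have h1 := hbot' t1 ⟨ht, le_refl _⟩
    constructor
    · by_contra hle
      push_neg at hle
      have h2 := Real.cos_nonpos_of_pi_div_two_le_of_le
        (by linarith [h1.1] : π / 2 ≤ ψ (t1, r0)) (by linarith : ψ (t1, r0) ≤ π + π / 2)
      have := hcospos r0 ⟨le_refl _, hr⟩
      linarith
    · exact h1.2
  -- right edge
  have hright' := confine (h := fun s => ψ (t1, s)) (u := r0) (v := r1) (c := 3 * π / 2)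
    (d := 5 * π / 2) (w := r0)
    (by exact (hψc.comp (continuous_const.prodMk continuous_id)).continuousOn)
    ⟨le_refl _, hr⟩
    (fun s hs => ⟨fun h => by
        have := hcospos s hs; rw [show ψ (t1, s) = 3*π/2 from h, hc32] at this; linarith,
      fun h => by
        have := hcospos s hs; rw [show ψ (t1, s) = 5*π/2 from h, hc52] at this; linarith⟩)
    ⟨h10.1, by have := h10.2; linarith⟩
  have h11 : ψ (t1, r1) ∈ Set.Ioo (2 * π) (5 * π / 2) := by
    have h1 := hright' r1 ⟨hr, le_refl _⟩
    constructor
    · by_contra hle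
      push_neg at hle
      have h2 : 0 ≤ Real.sin (2 * π - ψ (t1, r1)) :=
        Real.sin_nonneg_of_nonneg_of_le_pi (by linarith) (by linarith [h1.1])
      rw [Real.sin_two_pi_sub] at h2
      have := hsinpos t1 ⟨ht, le_refl _⟩
      linarith
    · exact h1.2
  -- top edge
  have htop' := confine (h := fun s => ψ (s, r1)) (u := t0) (v := t1) (c := 2 * π) (d := 3 * π)
    (w := t1)
    (by exact (hψc.comp (continuous_id.prodMk continuous_const)).continuousOn)
    ⟨ht, le_refl _⟩
    (fun s hs => ⟨fun h => by
        have := hsinpos s hs; rw [show ψ (s, r1) = 2*π from h, Real.sin_two_pi] at this; linarith,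
      fun h => by
        have := hsinpos s hs; rw [show ψ (s, r1) = 3*π from h, hs3] at this; linarith⟩)
    ⟨h11.1, by have := h11.2; linarith⟩
  have h01 : ψ (t0, r1) ∈ Set.Ioo (5 * π / 2) (3 * π) := by
    have h1 := htop' t0 ⟨le_refl _, ht⟩
    constructor
    · by_contra hle
      push_neg at hle
      have h1' : ψ (t0, r1) - 2 * π ∈ Set.Icc (-(π/2)) (π/2) := by
        constructor <;> [linarith [h1.1]; linarith]
      have h2 := Real.cos_nonneg_of_mem_Icc h1'
      rw [Real.cos_sub_two_pi] at h2
      have := hcosneg r1 ⟨hr, le_refl _⟩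
      linarith
    · exact h1.2
  -- left edge
  have hleft' := confine (h := fun s => ψ (t0, s)) (u := r0) (v := r1) (c := 5 * π / 2)
    (d := 7 * π / 2) (w := r1)
    (by exact (hψc.comp (continuous_const.prodMk continuous_id)).continuousOn)
    ⟨hr, le_refl _⟩
    (fun s hs => ⟨fun h => by
        have := hcosneg s hs; rw [show ψ (t0, s) = 5*π/2 from h, hc52] at this; linarith,
      fun h => by
        have := hcosneg s hs; rw [show ψ (t0, s) = 7*π/2 from h, hc72] at this; linarith⟩)
    ⟨h01.1, by have := h01.2; linarith⟩
  have hfin := hleft' r0 ⟨le_refl _, hr⟩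
  have := h00.2
  have := hfin.1
  linarith


set_option maxHeartbeats 2000000 in
/-- Let `I` be a closed arc in the unit circle with an open neighborhood
`U ⊆ ℂ`, and `χ` continuous on `U ∩ cl 𝔻` with `δ < |χ| < 1 - δ` there. Then there is `N`
such that for every `k ≥ N` the equation `z ^ k = χ z` has at least `k * |I|` solutions in
`U ∩ cl 𝔻`, where `|I| = (b - a) / (2π)` is the normalized arc length. -/
theorem lelong_arc_solution_count
    (a b : ℝ) (hab : a ≤ b) (hlen : b - a < 2 * Real.pi)
    (I U : Set ℂ)
    (hI : I = (fun t : ℝ => Complex.exp (t * Complex.I)) '' Set.Icc a b)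
    (hU : IsOpen U) (hIU : I ⊆ U)
    (χ : ℂ → ℂ) (hχ : ContinuousOn χ (U ∩ closedBall 0 1))
    (δ : ℝ) (hδ0 : 0 < δ) (hδ1 : δ < 1)
    (hχbound : ∀ z ∈ U ∩ closedBall (0 : ℂ) 1,
      δ < ‖χ z‖ ∧ ‖χ z‖ < 1 - δ) :
    ∃ N : ℕ, ∀ k : ℕ, N ≤ k →
      ∃ S : Finset ℂ, (↑S : Set ℂ) ⊆ U ∩ closedBall (0 : ℂ) 1 ∧
        (∀ z ∈ S, z ^ k = χ z) ∧
        (k : ℝ) * ((b - a) / (2 * Real.pi)) ≤ (S.card : ℝ) := by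
  have hπ : 0 < π := Real.pi_pos
  have h2π : (0:ℝ) < 2 * π := by linarith
  -- a thickened arc sits inside U
  have hIc : IsCompact I := by
    rw [hI]
    exact isCompact_Icc.image (Complex.continuous_exp.comp
      (Complex.continuous_ofReal.mul continuous_const))
  obtain ⟨ε, hε0, hεsub⟩ := hIc.exists_cthickening_subset_open hU hIU
  set η : ℝ := min (ε / 3) (min ((2 * π - (b - a)) / 4) (1 / 2)) with hη
  have hη0 : 0 < η := by
    apply lt_min (by linarith)
    apply lt_min (by linarith) (by norm_num)
  have hηε : 3 * η ≤ ε := by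
    have := min_le_left (ε / 3) (min ((2 * π - (b - a)) / 4) (1 / 2))
    rw [← hη] at this
    linarith
  have hηarc : b - a + 2 * η < 2 * π := by
    have h1 := (min_le_right (ε / 3) (min ((2 * π - (b - a)) / 4) (1 / 2))).trans
      (min_le_left _ _)
    rw [← hη] at h1
    linarith
  have hηhalf : η ≤ 1 / 2 := by
    have h1 := (min_le_right (ε / 3) (min ((2 * π - (b - a)) / 4) (1 / 2))).trans
      (min_le_right _ _)
    rw [← hη] at h1
    linarith
  -- the thickened annular arc is in U and in the closed disc
  have hKU : ∀ t ∈ Set.Icc (a - η) (b + η), ∀ r ∈ Set.Icc (1 - η) 1,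
      ((r : ℂ) * Complex.exp (t * Complex.I)) ∈ U ∩ closedBall (0:ℂ) 1 := by
    intro t htm r hrm
    have hr0 : (0:ℝ) < r := by
      have := hrm.1
      linarith [hηhalf]
    constructor
    · -- in U
      set t'' : ℝ := max a (min t b) with ht''
      have ht''m : t'' ∈ Set.Icc a b := ⟨le_max_left _ _, max_le hab (min_le_right _ _)⟩
      have hw : Complex.exp (t'' * Complex.I) ∈ I := by
        rw [hI]
        exact ⟨t'', ht''m, rfl⟩
      have htt'' : |t - t''| ≤ η := by
        have h1 : a - η ≤ t := htm.1
        have h2 : t ≤ b + η := htm.2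
        rw [abs_le]
        rcases le_total t a with h | h
        · have heq : t'' = a := by rw [ht'', min_eq_left (h.trans hab)]; exact max_eq_left h
          rw [heq]
          constructor <;> linarith
        · rcases le_total t b with h' | h'
          · have heq : t'' = t := by rw [ht'', min_eq_left h']; exact max_eq_right h
            rw [heq]
            constructor <;> linarith [hη0.le]
          · have heq : t'' = b := by rw [ht'', min_eq_right h']; exact max_eq_right hab
            rw [heq]
            constructor <;> linarith
      have hd1 : dist ((r:ℂ) * Complex.exp (t * Complex.I)) (Complex.exp (t * Complex.I)) ≤ η := by
        rw [Complex.dist_eq]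
        have : (r:ℂ) * Complex.exp (t * Complex.I) - Complex.exp (t * Complex.I)
            = ((r : ℂ) - 1) * Complex.exp (t * Complex.I) := by ring
        rw [this, norm_mul, Complex.norm_exp_ofReal_mul_I, mul_one]
        have : ((r:ℂ) - 1) = ((r - 1 : ℝ) : ℂ) := by push_cast; ring
        rw [this, Complex.norm_real, Real.norm_eq_abs, abs_sub_comm, _root_.abs_of_nonneg (by linarith [hrm.2] : (0:ℝ) ≤ 1 - r)]
        linarith [hrm.1]
      have hd2 : dist (Complex.exp (t * Complex.I)) (Complex.exp (t'' * Complex.I)) ≤ 2 * η := by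
        rw [Complex.dist_eq]
        have hsplit : Complex.exp (t * Complex.I) - Complex.exp (t'' * Complex.I)
            = Complex.exp (t'' * Complex.I) * (Complex.exp (((t - t'' : ℝ) : ℂ) * Complex.I) - 1) := by
          rw [mul_sub, mul_one, ← Complex.exp_add]
          push_cast
          ring_nf
        rw [hsplit, norm_mul, Complex.norm_exp_ofReal_mul_I, one_mul]
        have habs : ‖((t - t'' : ℝ) : ℂ) * Complex.I‖ = |t - t''| := by
          rw [norm_mul, Complex.norm_I, mul_one, Complex.norm_real, Real.norm_eq_abs]
        have hle1 : ‖((t - t'' : ℝ) : ℂ) * Complex.I‖ ≤ 1 := by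
          rw [habs]
          linarith [htt'', hηhalf]
        calc ‖Complex.exp (((t - t'' : ℝ) : ℂ) * Complex.I) - 1‖
            ≤ 2 * ‖((t - t'' : ℝ) : ℂ) * Complex.I‖ := Complex.norm_exp_sub_one_le hle1
        _ = 2 * |t - t''| := by rw [habs]
        _ ≤ 2 * η := by linarith
      have hdist : dist ((r:ℂ) * Complex.exp (t * Complex.I)) (Complex.exp (t'' * Complex.I)) ≤ ε := by
        calc dist ((r:ℂ) * Complex.exp (t * Complex.I)) (Complex.exp (t'' * Complex.I))
            ≤ dist ((r:ℂ) * Complex.exp (t * Complex.I)) (Complex.exp (t * Complex.I))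
              + dist (Complex.exp (t * Complex.I)) (Complex.exp (t'' * Complex.I)) := dist_triangle _ _ _
        _ ≤ η + 2 * η := add_le_add hd1 hd2
        _ ≤ ε := by linarith
      exact hεsub (Metric.mem_cthickening_of_dist_le _ _ _ _ hw hdist)
    · -- in the closed ball
      rw [Metric.mem_closedBall, Complex.dist_eq, sub_zero, norm_mul,
        Complex.norm_exp_ofReal_mul_I, mul_one, Complex.norm_real, Real.norm_eq_abs,
        _root_.abs_of_nonneg hr0.le]
      exact hrm.2
  -- the function g on the parameter rectangle
  set Q : Set (ℝ × ℝ) := Set.Icc (a - η) (b + η) ×ˢ Set.Icc (1 - η) 1 with hQ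
  have hab' : a - η ≤ b + η := by linarith
  have hr01 : 1 - η ≤ (1:ℝ) := by linarith
  set g : ℝ × ℝ → ℂ := fun p => χ ((p.2 : ℂ) * Complex.exp (p.1 * Complex.I)) with hg
  have hmapsTo : ∀ p ∈ Q, ((p.2 : ℂ) * Complex.exp (p.1 * Complex.I)) ∈ U ∩ closedBall (0:ℂ) 1 :=
    fun p hp => hKU p.1 hp.1 p.2 hp.2
  have hgc : ContinuousOn g Q := by
    apply hχ.comp
    · exact ((Complex.continuous_ofReal.comp continuous_snd).mul
        (Complex.continuous_exp.comp ((Complex.continuous_ofReal.comp continuous_fst).mul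
          continuous_const))).continuousOn
    · exact hmapsTo
  have hg0 : ∀ p ∈ Q, g p ≠ 0 := by
    intro p hp
    have := (hχbound _ (hmapsTo p hp)).1
    intro h
    rw [hg] at h
    simp only at h
    rw [h] at this
    simp at this
    linarith
  obtain ⟨F, hFc, hFe⟩ := exists_branch hab' hr01 g hgc hg0
  have habsg : ∀ p ∈ Q, ‖g p‖ = Real.exp ((F p).re) := by
    intro p hp
    rw [← hFe p hp, Complex.norm_exp]
  -- bound on the phase
  have hQc : IsCompact Q := isCompact_Icc.prod isCompact_Icc
  have hQne : Q.Nonempty := ⟨(a - η, 1 - η), by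
    constructor
    · exact ⟨le_refl _, hab'⟩
    · exact ⟨le_refl _, hr01⟩⟩
  obtain ⟨pM, hpMQ, hpM⟩ := hQc.exists_isMaxOn hQne
    ((continuous_abs.comp (Complex.continuous_im.comp hFc)).continuousOn)
  set M : ℝ := |(F pM).im| with hM
  have hMb : ∀ p ∈ Q, |(F p).im| ≤ M := fun p hp => isMaxOn_iff.mp hpM p hp
  have hM0 : 0 ≤ M := (abs_nonneg _).trans (hMb pM hpMQ)
  -- choose N
  obtain ⟨k₁, hk₁⟩ := exists_pow_lt_of_lt_one hδ0 (by linarith : 1 - η < 1)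
  obtain ⟨k₂, hk₂⟩ := exists_nat_ge ((M + 1 + π) / η)
  refine ⟨max (max k₁ k₂) 1, ?_⟩
  intro k hk
  have hkk₁ : k₁ ≤ k := le_trans (le_trans (le_max_left _ _) (le_max_left _ _)) hk
  have hkk₂ : k₂ ≤ k := le_trans (le_trans (le_max_right _ _) (le_max_left _ _)) hk
  have hk1 : 1 ≤ k := le_trans (le_max_right _ _) hk
  have hk0 : (0:ℝ) < k := by exact_mod_cast hk1
  have hpow : (1 - η) ^ k < δ := by
    calc (1 - η) ^ k ≤ (1 - η) ^ k₁ :=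
          pow_le_pow_of_le_one (by linarith) (by linarith) hkk₁
    _ < δ := hk₁
  have hkη : M + 1 + π ≤ (k:ℝ) * η := by
    have h1 : ((k₂ : ℝ)) ≤ (k : ℝ) := by exact_mod_cast hkk₂
    have h2 : (M + 1 + π) / η ≤ (k:ℝ) := le_trans hk₂ h1
    calc M + 1 + π = ((M + 1 + π) / η) * η := by field_simp
    _ ≤ (k:ℝ) * η := mul_le_mul_of_nonneg_right h2 hη0.le
  -- the integer range
  set A : ℝ := ((k:ℝ) * (a - η) + M + 1) / (2 * π) with hA
  set B : ℝ := ((k:ℝ) * (b + η) - M - 1) / (2 * π) with hB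
  -- existence of solutions indexed by integers
  have hsol : ∀ n ∈ Finset.Icc ⌈A⌉ ⌊B⌋, ∃ z : ℂ, ∃ t r : ℝ,
      z = (r : ℂ) * Complex.exp (t * Complex.I) ∧ t ∈ Set.Icc (a - η) (b + η) ∧
      r ∈ Set.Icc (1 - η) 1 ∧ z ∈ U ∩ closedBall (0:ℂ) 1 ∧ z ^ k = χ z ∧
      (k:ℝ) * t - (F (t, r)).im = 2 * π * n := by
    intro n hn
    rw [Finset.mem_Icc] at hn
    have hnA : A ≤ (n:ℝ) := Int.ceil_le.mp hn.1
    have hnB : (n:ℝ) ≤ B := Int.le_floor.mp hn.2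
    have hnA' : (k:ℝ) * (a - η) + M + 1 ≤ 2 * π * n := by
      rw [hA, div_le_iff₀ h2π] at hnA
      linarith
    have hnB' : 2 * π * n ≤ (k:ℝ) * (b + η) - M - 1 := by
      rw [hB, le_div_iff₀ h2π] at hnB
      linarith
    set tl : ℝ := (2 * π * n - (M + 1)) / k with htl
    set tr : ℝ := (2 * π * n + (M + 1)) / k with htr
    have htltr : tl ≤ tr := by
      rw [htl, htr, div_le_div_iff₀ hk0 hk0]
      nlinarith [hM0, hk0]
    have htlA : a - η ≤ tl := by
      rw [htl, le_div_iff₀ hk0]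
      linarith
    have htrB : tr ≤ b + η := by
      rw [htr, div_le_iff₀ hk0]
      linarith
    set f : ℝ × ℝ → ℂ := fun p =>
      (((k:ℝ) * p.1 - (F p).im - 2 * π * n : ℝ) : ℂ)
        + ((p.2 ^ k - Real.exp ((F p).re) : ℝ) : ℂ) * Complex.I with hf
    have hfre : ∀ t' r' : ℝ, (f (t', r')).re = (k:ℝ) * t' - (F (t', r')).im - 2 * π * n := by
      intro t' r'
      rw [hf]
      simp [← Complex.ofReal_pow, ← Complex.ofReal_exp]
    have hfim : ∀ t' r' : ℝ, (f (t', r')).im = r' ^ k - Real.exp ((F (t', r')).re) := by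
      intro t' r'
      rw [hf]
      simp [← Complex.ofReal_pow, ← Complex.ofReal_exp]
    have hQmem : ∀ t' ∈ Set.Icc tl tr, ∀ r' ∈ Set.Icc (1 - η) (1:ℝ), ((t', r') : ℝ × ℝ) ∈ Q :=
      fun t' ht' r' hr' => ⟨⟨htlA.trans ht'.1, ht'.2.trans htrB⟩, hr'⟩
    have hfc : ContinuousOn f (Set.Icc tl tr ×ˢ Set.Icc (1 - η) (1:ℝ)) := by
      apply Continuous.continuousOn
      rw [hf]
      exact (Complex.continuous_ofReal.comp (((continuous_const.mul continuous_fst).sub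
        (Complex.continuous_im.comp hFc)).sub continuous_const)).add
        ((Complex.continuous_ofReal.comp ((continuous_snd.pow k).sub
          (Real.continuous_exp.comp (Complex.continuous_re.comp hFc)))).mul continuous_const)
    have hktl : (k:ℝ) * tl = 2 * π * n - (M + 1) := by
      rw [htl]
      field_simp
    have hktr : (k:ℝ) * tr = 2 * π * n + (M + 1) := by
      rw [htr]
      field_simp
    have hleft : ∀ r' ∈ Set.Icc (1 - η) (1:ℝ), (f (tl, r')).re < 0 := by
      intro r' hr'
      rw [hfre]
      have him := hMb (tl, r') (hQmem tl ⟨le_refl _, htltr⟩ r' hr')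
      have h2 := neg_abs_le ((F (tl, r')).im)
      linarith
    have hright : ∀ r' ∈ Set.Icc (1 - η) (1:ℝ), 0 < (f (tr, r')).re := by
      intro r' hr'
      rw [hfre]
      have him := hMb (tr, r') (hQmem tr ⟨htltr, le_refl _⟩ r' hr')
      have h2 := le_abs_self ((F (tr, r')).im)
      linarith
    have hbot : ∀ t' ∈ Set.Icc tl tr, (f (t', 1 - η)).im < 0 := by
      intro t' ht'
      rw [hfim]
      have hpQ := hQmem t' ht' (1 - η) ⟨le_refl _, hr01⟩
      have h2 : δ < ‖g (t', 1 - η)‖ := (hχbound _ (hmapsTo _ hpQ)).1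
      rw [habsg _ hpQ] at h2
      linarith [hpow]
    have htop : ∀ t' ∈ Set.Icc tl tr, 0 < (f (t', 1)).im := by
      intro t' ht'
      rw [hfim]
      have hpQ := hQmem t' ht' 1 ⟨hr01, le_refl _⟩
      have h2 : ‖g (t', 1)‖ < 1 - δ := (hχbound _ (hmapsTo _ hpQ)).2
      rw [habsg _ hpQ] at h2
      simp only [one_pow]
      linarith
    obtain ⟨⟨t, r⟩, hpmem, hpzero⟩ := miranda htltr hr01 f hfc hleft hright hbot htop
    have htm : t ∈ Set.Icc tl tr := hpmem.1
    have hrm : r ∈ Set.Icc (1 - η) (1:ℝ) := hpmem.2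
    have tQ : t ∈ Set.Icc (a - η) (b + η) := ⟨htlA.trans htm.1, htm.2.trans htrB⟩
    have hQm : ((t, r) : ℝ × ℝ) ∈ Q := ⟨tQ, hrm⟩
    have hf1 : (k:ℝ) * t - (F (t, r)).im - 2 * π * n = 0 := by
      rw [← hfre t r, hpzero, Complex.zero_re]
    have hf2 : r ^ k = Real.exp ((F (t, r)).re) := by
      have h2 := hfim t r
      rw [hpzero, Complex.zero_im] at h2
      linarith
    have hzk : ((r:ℂ) * Complex.exp (t * Complex.I)) ^ k
        = χ ((r:ℂ) * Complex.exp (t * Complex.I)) := by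
      have hgeq : g (t, r) = χ ((r:ℂ) * Complex.exp (t * Complex.I)) := rfl
      rw [mul_pow, ← Complex.exp_nat_mul]
      have hkt : (k:ℝ) * t = (F (t, r)).im + 2 * π * n := by linarith
      have hcast : ((k:ℕ):ℂ) * ((t:ℂ) * Complex.I)
          = (((F (t, r)).im : ℝ) : ℂ) * Complex.I + (n:ℂ) * (2 * (π:ℂ) * Complex.I) := by
        calc ((k:ℕ):ℂ) * ((t:ℂ) * Complex.I) = (((k:ℝ) * t : ℝ) : ℂ) * Complex.I := by
              push_cast
              ring
        _ = (((F (t, r)).im + 2 * π * n : ℝ) : ℂ) * Complex.I := by rw [hkt]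
        _ = _ := by
              push_cast
              ring
      rw [hcast, Complex.exp_add, Complex.exp_int_mul_two_pi_mul_I, mul_one]
      have hrk : ((r:ℂ)) ^ k = Complex.exp (((F (t, r)).re : ℝ) : ℂ) := by
        rw [← Complex.ofReal_pow, hf2, Complex.ofReal_exp]
      rw [hrk, ← Complex.exp_add, ← hgeq, ← hFe (t, r) hQm]
      congr 1
      exact Complex.re_add_im (F (t, r))
    exact ⟨(r:ℂ) * Complex.exp (t * Complex.I), t, r, rfl, tQ, hrm, hKU t tQ r hrm, hzk,
      by linarith⟩
  -- extract the solutions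
  choose! Z T Rv hzdef htmem hrmem hzU hzeq hphase using hsol
  have hinj : Set.InjOn Z ↑(Finset.Icc ⌈A⌉ ⌊B⌋) := by
    intro m hm n hn hZ
    rw [Finset.mem_coe] at hm hn
    rw [hzdef m hm, hzdef n hn] at hZ
    have hrm' := (hrmem m hm).1
    have hrn' := (hrmem n hn).1
    have hrmpos : (0:ℝ) < Rv m := by linarith [hηhalf]
    have hrnpos : (0:ℝ) < Rv n := by linarith [hηhalf]
    have h3 := congrArg norm hZ
    rw [norm_mul, norm_mul, Complex.norm_exp_ofReal_mul_I, Complex.norm_exp_ofReal_mul_I,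
      mul_one, mul_one, Complex.norm_real, Complex.norm_real, Real.norm_eq_abs, Real.norm_eq_abs,
      _root_.abs_of_nonneg hrmpos.le, _root_.abs_of_nonneg hrnpos.le] at h3
    have h4 : Complex.exp ((T m : ℂ) * Complex.I) = Complex.exp ((T n : ℂ) * Complex.I) := by
      rw [h3] at hZ
      exact mul_left_cancel₀ (Complex.ofReal_ne_zero.mpr hrnpos.ne') hZ
    obtain ⟨j, hj⟩ := Complex.exp_eq_exp_iff_exists_int.mp h4
    have h5 : T m = T n + (j:ℝ) * (2 * π) := by
      have h6 := congrArg Complex.im hj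
      simpa using h6
    have hTm := htmem m hm
    have hTn := htmem n hn
    have hj0 : j = 0 := by
      by_contra hj0
      have h6 : (1:ℝ) ≤ |(j:ℝ)| := by
        rw [← Int.cast_abs]
        exact_mod_cast Int.one_le_abs hj0
      have h7 : |T m - T n| ≤ b - a + 2 * η := by
        rw [abs_le]
        constructor <;> [linarith [hTm.1, hTn.2]; linarith [hTm.2, hTn.1]]
      rw [h5, show T n + (j:ℝ) * (2*π) - T n = (j:ℝ) * (2*π) by ring] at h7
      rw [abs_mul, _root_.abs_of_nonneg h2π.le] at h7
      have h8 := mul_le_mul_of_nonneg_right h6 h2π.le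
      rw [one_mul] at h8
      linarith
    rw [hj0, Int.cast_zero, zero_mul, add_zero] at h5
    have hp1 := hphase m hm
    have hp2 := hphase n hn
    rw [h5, h3] at hp1
    have h8 : 2 * π * (m:ℝ) = 2 * π * (n:ℝ) := by linarith
    have h9 : (m:ℝ) = (n:ℝ) := mul_left_cancel₀ h2π.ne' h8
    exact_mod_cast h9
  refine ⟨(Finset.Icc ⌈A⌉ ⌊B⌋).image Z, ?_, ?_, ?_⟩
  · intro z hz
    rw [Finset.coe_image, Set.mem_image] at hz
    obtain ⟨n, hn, rfl⟩ := hz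
    exact hzU n (Finset.mem_coe.mp hn)
  · intro z hz
    rw [Finset.mem_image] at hz
    obtain ⟨n, hn, rfl⟩ := hz
    exact hzeq n hn
  · rw [Finset.card_image_of_injOn hinj, Int.card_Icc]
    have hceil : (⌈A⌉ : ℝ) < A + 1 := Int.ceil_lt_add_one A
    have hfloor : B - 1 < (⌊B⌋ : ℝ) := Int.sub_one_lt_floor B
    have hA2 : A * (2 * π) = (k:ℝ) * (a - η) + M + 1 := by
      rw [hA]
      field_simp
    have hB2 : B * (2 * π) = (k:ℝ) * (b + η) - M - 1 := by
      rw [hB]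
      field_simp
    have hBA : (k:ℝ) * ((b - a) / (2 * π)) ≤ ((⌊B⌋ + 1 - ⌈A⌉ : ℤ) : ℝ) := by
      rw [show (k:ℝ) * ((b - a) / (2 * π)) = ((k:ℝ) * (b - a)) / (2 * π) by ring,
        div_le_iff₀ h2π]
      have hstep : (B - A - 1) * (2 * π) < (((⌊B⌋ : ℝ)) + 1 - ⌈A⌉) * (2 * π) :=
        mul_lt_mul_of_pos_right (by linarith) h2π
      have hexp : (B - A - 1) * (2 * π) = (k:ℝ) * (b - a) + 2 * (k:ℝ) * η - 2 * M - 2 - 2 * π := by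
        rw [show (B - A - 1) * (2 * π) = B * (2 * π) - A * (2 * π) - 2 * π by ring, hA2, hB2]
        ring
      push_cast
      nlinarith [hkη]
    calc (k:ℝ) * ((b - a) / (2 * π)) ≤ ((⌊B⌋ + 1 - ⌈A⌉ : ℤ) : ℝ) := hBA
    _ ≤ (((⌊B⌋ + 1 - ⌈A⌉ : ℤ).toNat : ℕ) : ℝ) := by exact_mod_cast Int.self_le_toNat _
end

section
/- Let b ∈ 𝔻 \ {0} and 0 < b₀ < 1 with |b| ≤ b₀. The modified Cauchy–Green operator T_{0,b}(f)(z) = T(f)(z) − T(f)(0) − (z/b)[T(f)(b) − T(f)(0)] is a bounded linear operator from C^{k,β}(cl 𝔻) to C^{k+1,β}(cl 𝔻), with operator norm bounded uniformly in b for |b| ≤ b₀. -/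
open Complex Metric MeasureTheory

/-- The Cauchy–Green operator `T(f)(z) = (1/π) ∫_𝔻 f(ζ)/(z - ζ) dx dy`. -/
noncomputable def cauchyGreen (f : ℂ → ℂ) (z : ℂ) : ℂ :=
  (Real.pi : ℂ)⁻¹ * ∫ ζ in ball (0 : ℂ) 1, f ζ / (z - ζ)

/-- The modified Cauchy–Green operator
`T_{0,b}(f)(z) = T(f)(z) - T(f)(0) - (z/b)[T(f)(b) - T(f)(0)]`. -/
noncomputable def cauchyGreenMod (b : ℂ) (f : ℂ → ℂ) (z : ℂ) : ℂ :=
  cauchyGreen f z - cauchyGreen f 0 - (z / b) * (cauchyGreen f b - cauchyGreen f 0)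

/-- The values `‖D^i f (z)‖` for `i ≤ k`, `z ∈ cl 𝔻`. -/
def derivVals (k : ℕ) (f : ℂ → ℂ) : Set ℝ :=
  {x | ∃ i ≤ k, ∃ z ∈ closedBall (0 : ℂ) 1, x = ‖iteratedFDeriv ℝ i f z‖}

/-- The Hölder difference quotients of `D^k f` on `cl 𝔻`. -/
def holderVals (k : ℕ) (β : ℝ) (f : ℂ → ℂ) : Set ℝ :=
  {x | ∃ z ∈ closedBall (0 : ℂ) 1, ∃ w ∈ closedBall (0 : ℂ) 1, z ≠ w ∧
    x = ‖iteratedFDeriv ℝ k f z - iteratedFDeriv ℝ k f w‖ / ‖z - w‖ ^ β}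

/-- The `C^{k,β}(cl 𝔻)` Hölder norm. -/
noncomputable def holderNorm (k : ℕ) (β : ℝ) (f : ℂ → ℂ) : ℝ :=
  sSup (derivVals k f) + sSup (holderVals k β f)

/-- Membership in the Hölder space `C^{k,β}(cl 𝔻)`. -/
def MemHolderDisc (k : ℕ) (β : ℝ) (f : ℂ → ℂ) : Prop :=
  ContDiff ℝ (k : ℕ∞) f ∧ BddAbove (derivVals k f) ∧ BddAbove (holderVals k β f)

/-! ### Auxiliary lemmas about affine maps `z ↦ a + c * z` -/

private lemma aff_contDiff (a c : ℂ) (n : ℕ∞) : ContDiff ℝ n (fun z : ℂ => a + c * z) :=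
  contDiff_const.add (contDiff_const.mul contDiff_id)

private lemma aff_fderiv (a c : ℂ) (x : ℂ) :
    fderiv ℝ (fun z : ℂ => a + c * z) x = ContinuousLinearMap.mul ℝ ℂ c := by
  have h : HasFDerivAt (fun z : ℂ => a + c * z) (ContinuousLinearMap.mul ℝ ℂ c) x := by
    have := ((ContinuousLinearMap.mul ℝ ℂ c).hasFDerivAt (x := x)).const_add a
    simpa using this
  exact h.fderiv

private lemma iFD_const_indep {F : Type*} [NormedAddCommGroup F] [NormedSpace ℝ F]
    (i : ℕ) (c : F) (x y : ℂ) :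
    iteratedFDeriv ℝ i (fun _ : ℂ => c) x = iteratedFDeriv ℝ i (fun _ : ℂ => c) y := by
  cases i with
  | zero => ext m; simp
  | succ i => simp [iteratedFDeriv_const_of_ne (Nat.succ_ne_zero i)]

private lemma aff_fderiv_eq (a c : ℂ) :
    (fderiv ℝ fun z : ℂ => a + c * z) = fun _ : ℂ => ContinuousLinearMap.mul ℝ ℂ c :=
  funext (aff_fderiv a c)

private lemma aff_iFD_succ_indep (a c : ℂ) (i : ℕ) (x y : ℂ) :
    iteratedFDeriv ℝ (i + 1) (fun z : ℂ => a + c * z) x =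
      iteratedFDeriv ℝ (i + 1) (fun z : ℂ => a + c * z) y := by
  rw [iteratedFDeriv_succ_eq_comp_right, iteratedFDeriv_succ_eq_comp_right]
  simp only [Function.comp_apply]
  congr 1
  rw [show (fun y => fderiv ℝ (fun z : ℂ => a + c * z) y)
      = fun _ : ℂ => ContinuousLinearMap.mul ℝ ℂ c from aff_fderiv_eq a c]
  exact iFD_const_indep _ _ _ _

private lemma aff_iFD_norm (a c : ℂ) (i : ℕ) (x : ℂ) (hx : ‖x‖ ≤ 1) :
    ‖iteratedFDeriv ℝ i (fun z : ℂ => a + c * z) x‖ ≤ ‖a‖ + ‖c‖ := by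
  cases i with
  | zero =>
      rw [norm_iteratedFDeriv_zero]
      calc ‖a + c * x‖ ≤ ‖a‖ + ‖c * x‖ := norm_add_le _ _
        _ ≤ ‖a‖ + ‖c‖ := by
            rw [norm_mul]
            nlinarith [norm_nonneg c]
  | succ i =>
      rw [← norm_iteratedFDeriv_fderiv, aff_fderiv_eq a c]
      cases i with
      | zero =>
          rw [norm_iteratedFDeriv_zero]
          have := ContinuousLinearMap.opNorm_mul_apply_le ℝ ℂ c
          have := norm_nonneg a
          linarith
      | succ j =>
          rw [iteratedFDeriv_const_of_ne (Nat.succ_ne_zero j)]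
          simp
          positivity

private lemma iFD_sub_apply {f g : ℂ → ℂ} {i : ℕ} (hf : ContDiff ℝ (i : ℕ∞) f)
    (hg : ContDiff ℝ (i : ℕ∞) g) (x : ℂ) :
    iteratedFDeriv ℝ i (fun z => f z - g z) x =
      iteratedFDeriv ℝ i f x - iteratedFDeriv ℝ i g x := by
  have h1 : (fun z => f z - g z) = f + (-g) := by
    funext z; simp [sub_eq_add_neg]
  have hg' : ContDiff ℝ (i : ℕ∞) (-g) := hg.neg
  rw [h1, iteratedFDeriv_add_apply hf.contDiffAt hg'.contDiffAt, iteratedFDeriv_neg_apply, sub_eq_add_neg]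

/-- For `|b| ≤ b₀ < 1`, `b ≠ 0`, the modified Cauchy–Green operator
`T_{0,b}` is a bounded linear operator `C^{k,β}(cl 𝔻) → C^{k+1,β}(cl 𝔻)` with operator
norm bounded uniformly in `b`; boundedness of `T` itself (Vekua's theorem) is the given
hypothesis. -/
theorem cauchyGreenMod_bounded
    (k : ℕ) (β b₀ : ℝ) (hβ0 : 0 < β) (hβ1 : β < 1) (hb₀0 : 0 < b₀) (hb₀1 : b₀ < 1)
    (hVekua : ∃ M₀ > 0, ∀ f : ℂ → ℂ, MemHolderDisc k β f →
      MemHolderDisc (k + 1) β (cauchyGreen f) ∧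
        holderNorm (k + 1) β (cauchyGreen f) ≤ M₀ * holderNorm k β f) :
    ∃ M > 0, ∀ b : ℂ, b ≠ 0 → ‖b‖ ≤ b₀ →
      (∀ f : ℂ → ℂ, MemHolderDisc k β f →
        MemHolderDisc (k + 1) β (cauchyGreenMod b f) ∧
          holderNorm (k + 1) β (cauchyGreenMod b f) ≤ M * holderNorm k β f) ∧
      (∀ f g : ℂ → ℂ,
        (∀ z : ℂ, IntegrableOn (fun ζ => f ζ / (z - ζ)) (ball (0 : ℂ) 1)) →
        (∀ z : ℂ, IntegrableOn (fun ζ => g ζ / (z - ζ)) (ball (0 : ℂ) 1)) →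
        ∀ z : ℂ, cauchyGreenMod b (f + g) z = cauchyGreenMod b f z + cauchyGreenMod b g z) ∧
      (∀ (a : ℂ) (f : ℂ → ℂ) (z : ℂ),
        cauchyGreenMod b (a • f) z = a * cauchyGreenMod b f z) := by
  obtain ⟨M₀, hM₀, hVek⟩ := hVekua
  refine ⟨3 * M₀, by positivity, fun b hb0 hbb₀ => ⟨?_, ?_, ?_⟩⟩
  · -- boundedness
    intro f hf
    obtain ⟨hg, hTf⟩ := hVek f hf
    set g : ℂ → ℂ := cauchyGreen f with hgdef
    obtain ⟨hgC, hgD, hgH⟩ := hg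
    set c₁ : ℂ := (g b - g 0) / b with hc₁
    have hbnorm : ‖b‖ ≤ b₀ := by exact hbb₀
    have hbmem : b ∈ closedBall (0 : ℂ) 1 := by
      simpa [mem_closedBall, dist_eq_norm] using le_trans hbnorm hb₀1.le
    have hbpos : (0 : ℝ) < ‖b‖ := norm_pos_iff.mpr hb0
    -- the function h
    have hfun : cauchyGreenMod b f = fun z => g z - (g 0 + c₁ * z) := by
      funext z
      rw [cauchyGreenMod, hc₁]
      field_simp
      ring
    -- derivVals facts on g
    have hSgnn : ∀ i ≤ k + 1, ∀ z ∈ closedBall (0 : ℂ) 1,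
        ‖iteratedFDeriv ℝ i g z‖ ≤ sSup (derivVals (k + 1) g) := by
      intro i hi z hz
      exact le_csSup hgD ⟨i, hi, z, hz, rfl⟩
    set Sg := sSup (derivVals (k + 1) g) with hSg
    have hSg0 : 0 ≤ Sg :=
      le_trans (norm_nonneg _) (hSgnn 0 (Nat.zero_le _) 0 (mem_closedBall_self one_pos.le))
    -- sSup holderVals g ≥ 0
    have hHg0 : 0 ≤ sSup (holderVals (k + 1) β g) := by
      have hmem : (‖iteratedFDeriv ℝ (k + 1) g 0 - iteratedFDeriv ℝ (k + 1) g 1‖ /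
          ‖(0 : ℂ) - 1‖ ^ β) ∈ holderVals (k + 1) β g := by
        refine ⟨0, mem_closedBall_self one_pos.le, 1, ?_, ?_, rfl⟩
        · simp [mem_closedBall, dist_eq_norm]
        · norm_num
      refine le_trans ?_ (le_csSup hgH hmem)
      positivity
    -- bound on c₁
    have hgdiff : ∀ x ∈ closedBall (0 : ℂ) 1, DifferentiableAt ℝ g x := by
      intro x _
      exact (hgC.differentiable (by simp)).differentiableAt
    have hfdbound : ∀ x ∈ closedBall (0 : ℂ) 1, ‖fderiv ℝ g x‖ ≤ Sg := by
      intro x hx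
      have : ‖iteratedFDeriv ℝ 1 g x‖ ≤ Sg := hSgnn 1 (Nat.succ_le_succ (Nat.zero_le k)) x hx
      rwa [← norm_iteratedFDeriv_fderiv, norm_iteratedFDeriv_zero] at this
    have hlip : ‖g b - g 0‖ ≤ Sg * ‖b - 0‖ :=
      (convex_closedBall (0 : ℂ) 1).norm_image_sub_le_of_norm_fderiv_le hgdiff hfdbound
        (mem_closedBall_self one_pos.le) hbmem
    have hc₁bound : ‖c₁‖ ≤ Sg := by
      rw [hc₁, norm_div]
      rw [div_le_iff₀ hbpos]
      simpa [sub_zero] using hlip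
    have hg0bound : ‖g 0‖ ≤ Sg := by
      have := hSgnn 0 (Nat.zero_le _) 0 (mem_closedBall_self one_pos.le)
      rwa [norm_iteratedFDeriv_zero] at this
    -- smoothness of h
    have hhC : ContDiff ℝ ((k + 1 : ℕ) : ℕ∞) (cauchyGreenMod b f) := by
      rw [hfun]
      exact hgC.sub (aff_contDiff (g 0) c₁ _)
    -- iterated derivatives of h
    have hiFD : ∀ i ≤ k + 1, ∀ x : ℂ, iteratedFDeriv ℝ i (cauchyGreenMod b f) x =
        iteratedFDeriv ℝ i g x - iteratedFDeriv ℝ i (fun z : ℂ => g 0 + c₁ * z) x := by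
      intro i hi x
      rw [hfun]
      exact iFD_sub_apply (hgC.of_le (by exact_mod_cast hi)) (aff_contDiff (g 0) c₁ _) x
    -- derivVals bound for h
    have hDbound : ∀ x ∈ derivVals (k + 1) (cauchyGreenMod b f), x ≤ Sg + (‖g 0‖ + ‖c₁‖) := by
      rintro x ⟨i, hi, z, hz, rfl⟩
      rw [hiFD i hi z]
      calc ‖iteratedFDeriv ℝ i g z - iteratedFDeriv ℝ i (fun z : ℂ => g 0 + c₁ * z) z‖
          ≤ ‖iteratedFDeriv ℝ i g z‖ + ‖iteratedFDeriv ℝ i (fun z : ℂ => g 0 + c₁ * z) z‖ :=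
            norm_sub_le _ _
        _ ≤ Sg + (‖g 0‖ + ‖c₁‖) := by
            have h1 := hSgnn i hi z hz
            have h2 := aff_iFD_norm (g 0) c₁ i z (by simpa [mem_closedBall, dist_eq_norm] using hz)
            linarith
    have hDne : (derivVals (k + 1) (cauchyGreenMod b f)).Nonempty :=
      ⟨‖iteratedFDeriv ℝ 0 (cauchyGreenMod b f) 0‖, 0, Nat.zero_le _, 0,
        mem_closedBall_self one_pos.le, rfl⟩
    have hDbdd : BddAbove (derivVals (k + 1) (cauchyGreenMod b f)) :=
      ⟨Sg + (‖g 0‖ + ‖c₁‖), hDbound⟩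
    -- holderVals of h equals that of g
    have hHkey : ∀ z w : ℂ, iteratedFDeriv ℝ (k + 1) (cauchyGreenMod b f) z -
        iteratedFDeriv ℝ (k + 1) (cauchyGreenMod b f) w =
        iteratedFDeriv ℝ (k + 1) g z - iteratedFDeriv ℝ (k + 1) g w := by
      intro z w
      rw [hiFD (k + 1) le_rfl z, hiFD (k + 1) le_rfl w,
        aff_iFD_succ_indep (g 0) c₁ k z w]
      abel
    have hHeq : holderVals (k + 1) β (cauchyGreenMod b f) = holderVals (k + 1) β g := by
      ext x
      constructor
      · rintro ⟨z, hz, w, hw, hzw, rfl⟩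
        exact ⟨z, hz, w, hw, hzw, by rw [hHkey z w]⟩
      · rintro ⟨z, hz, w, hw, hzw, rfl⟩
        exact ⟨z, hz, w, hw, hzw, by rw [hHkey z w]⟩
    refine ⟨⟨hhC, hDbdd, hHeq ▸ hgH⟩, ?_⟩
    -- the norm bound
    have h1 : sSup (derivVals (k + 1) (cauchyGreenMod b f)) ≤ Sg + (‖g 0‖ + ‖c₁‖) :=
      csSup_le hDne hDbound
    have h2 : sSup (holderVals (k + 1) β (cauchyGreenMod b f)) = sSup (holderVals (k + 1) β g) :=
      by rw [hHeq]
    have h3 : holderNorm (k + 1) β (cauchyGreenMod b f) ≤ 3 * holderNorm (k + 1) β g := by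
      rw [holderNorm, holderNorm, h2]
      have : Sg + (‖g 0‖ + ‖c₁‖) ≤ 3 * Sg := by linarith
      have hSgle : sSup (derivVals (k + 1) g) = Sg := rfl
      linarith [h1]
    calc holderNorm (k + 1) β (cauchyGreenMod b f) ≤ 3 * holderNorm (k + 1) β g := h3
      _ ≤ 3 * (M₀ * holderNorm k β f) := by linarith [hTf]
      _ = 3 * M₀ * holderNorm k β f := by ring
  · -- additivity
    intro f g hfint hgint z
    have key : ∀ w : ℂ, cauchyGreen (f + g) w = cauchyGreen f w + cauchyGreen g w := by
      intro w
      rw [cauchyGreen, cauchyGreen, cauchyGreen]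
      rw [show (fun ζ => (f + g) ζ / (w - ζ)) = fun ζ => f ζ / (w - ζ) + g ζ / (w - ζ) by
        funext ζ; simp [add_div]]
      rw [integral_add (hfint w) (hgint w)]
      ring
    simp only [cauchyGreenMod, key]
    ring
  · -- homogeneity
    intro a f z
    have key : ∀ w : ℂ, cauchyGreen (a • f) w = a * cauchyGreen f w := by
      intro w
      rw [cauchyGreen, cauchyGreen]
      rw [show (fun ζ => (a • f) ζ / (w - ζ)) = fun ζ => a * (f ζ / (w - ζ)) by
        funext ζ; simp [mul_div_assoc]]
      rw [integral_const_mul]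
      ring
    simp only [cauchyGreenMod, key]
    ring
end

section
/- Let X, Y be Banach spaces, D a direct-sum decomposition Y = F ⊕ R where R is a closed subspace and F is finite-dimensional spanned by vectors p₁,…,p_N. Then for any sufficiently small perturbations p̃₁,…,p̃_N of p₁,…,p_N, one still has Y = Span(p̃₁,…,p̃_N) ⊕ R. -/
/-- Stability of a finite-dimensional complement: if `Y = F ⊕ R` with `R`
a closed subspace of a Banach space `Y` and `F` spanned by the (independent) vectors
`p₁, …, p_N`, then for all sufficiently small perturbations `q_j` of the `p_j` one still
has `Y = Span(q₁, …, q_N) ⊕ R`. -/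
theorem complement_stable_under_perturbation
    (Y : Type*) [NormedAddCommGroup Y] [NormedSpace ℝ Y] [CompleteSpace Y]
    (R : Submodule ℝ Y) (hR : IsClosed (R : Set Y))
    (N : ℕ) (p : Fin N → Y) (hpind : LinearIndependent ℝ p)
    (hcompl : IsCompl (Submodule.span ℝ (Set.range p)) R) :
    ∃ ε > 0, ∀ q : Fin N → Y, (∀ j, ‖q j - p j‖ < ε) →
      IsCompl (Submodule.span ℝ (Set.range q)) R := by
  haveI : IsClosed (R : Set Y) := hR
  set π : Y →ₗ[ℝ] Y ⧸ R := R.mkQ with hπdef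
  have hπcont : Continuous π :=
    AddMonoidHomClass.continuous_of_bound π 1 (fun m => by
      simpa [one_mul, hπdef] using Submodule.Quotient.norm_mk_le R m)
  have hkerπ : LinearMap.ker π = R := Submodule.ker_mkQ R
  have hind : LinearIndependent ℝ (π ∘ p) :=
    hpind.map (by rw [hkerπ]; exact hcompl.disjoint)
  have hsp : Submodule.span ℝ (Set.range (π ∘ p)) = ⊤ := by
    rw [Set.range_comp, ← Submodule.map_span, Submodule.map_mkQ_eq_top, sup_comm]
    exact hcompl.sup_eq_top
  let b : Module.Basis (Fin N) ℝ (Y ⧸ R) := Module.Basis.mk hind hsp.ge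
  haveI : FiniteDimensional ℝ (Y ⧸ R) := Module.Finite.of_basis b
  have hLcont : ∀ i : Fin N, Continuous (b.coord i) := fun i =>
    LinearMap.continuous_of_finiteDimensional _
  let f : (Fin N → Y) → ℝ := fun q => Matrix.det (Matrix.of fun i j => b.coord i (π (q j)))
  have hfdet : ∀ q : Fin N → Y, f q = b.det (π ∘ q) := by
    intro q
    rw [Module.Basis.det_apply]
    rfl
  have hf : Continuous f := by
    apply Continuous.matrix_det
    apply continuous_matrix
    intro i j
    exact (hLcont i).comp (hπcont.comp (continuous_apply j))
  have hfp : f p ≠ 0 := by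
    have : (π ∘ p) = ⇑b := (Module.Basis.coe_mk hind hsp.ge).symm
    rw [hfdet, this, Module.Basis.det_self]
    exact one_ne_zero
  -- openness of {q | f q ≠ 0}
  have hopen : IsOpen {q : Fin N → Y | f q ≠ 0} :=
    isOpen_ne.preimage hf
  rcases Metric.isOpen_iff.1 hopen p hfp with ⟨ε, hε, hball⟩
  refine ⟨ε, hε, fun q hq => ?_⟩
  have hqball : q ∈ Metric.ball p ε := by
    rcases Nat.eq_zero_or_pos N with hN | hN
    · subst hN
      simpa [Metric.mem_ball, Subsingleton.elim q p] using hε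
    · haveI : Nonempty (Fin N) := ⟨⟨0, hN⟩⟩
      rw [Metric.mem_ball, dist_pi_lt_iff hε]
      intro j
      rw [dist_eq_norm]
      exact hq j
  have hfq : f q ≠ 0 := hball hqball
  have hbasisq : LinearIndependent ℝ (π ∘ q) ∧
      Submodule.span ℝ (Set.range (π ∘ q)) = ⊤ := by
    refine (Module.Basis.is_basis_iff_det b).2 ?_
    rw [← hfdet]
    exact isUnit_iff_ne_zero.2 hfq
  have hmemR : ∀ y : Y, y ∈ R ↔ π y = 0 := by
    intro y
    rw [hπdef, Submodule.mkQ_apply]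
    exact (Submodule.Quotient.mk_eq_zero R).symm
  constructor
  · -- disjoint
    rw [Submodule.disjoint_def]
    intro x hx hxR
    rcases (Submodule.mem_span_range_iff_exists_fun ℝ).1 hx with ⟨c, rfl⟩
    have h0 : ∑ i, c i • (π ∘ q) i = 0 := by
      have : π (∑ i, c i • q i) = 0 := (hmemR _).1 hxR
      simpa [map_sum, map_smul] using this
    have hc := Fintype.linearIndependent_iff.1 hbasisq.1 c h0
    simp [hc]
  · -- codisjoint
    rw [codisjoint_iff, eq_top_iff]
    intro y _
    have : π y ∈ Submodule.span ℝ (Set.range (π ∘ q)) := by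
      rw [hbasisq.2]; trivial
    rcases (Submodule.mem_span_range_iff_exists_fun ℝ).1 this with ⟨c, hc⟩
    refine Submodule.mem_sup.2 ⟨∑ i, c i • q i,
      (Submodule.mem_span_range_iff_exists_fun ℝ).2 ⟨c, rfl⟩,
      y - ∑ i, c i • q i, ?_, by abel⟩
    rw [hmemR]
    have : π (∑ i, c i • q i) = π y := by
      simpa [map_sum, map_smul] using hc
    rw [map_sub, this, sub_self]
end
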